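/- Let m ≥ 1, n ≠ 0 be integers and let y ∈ ℝ satisfy φ(y) := S_{n-1}(λ(y))·α(y) - S_{n-2}(λ(y)) = 0, where α(y) = 1 - (y-2)·S_{m-1}(y)·(S_{m-1}(y) - S_{m-2}(y)) and λ(y) = 2 + (y-2)²·S_{m-1}(y)². Then y > 2. -/

import Mathlib

theorem stmt14 (S : ℤ → ℝ → ℝ) (hS0 : ∀ z, S 0 z = 1) (hS1 : ∀ z, S 1 z = z)
    (hrec : ∀ (i : ℤ) (z : ℝ), S (i + 1) z = z * S i z - S (i - 1) z)
    (m n : ℤ) (hm : 1 ≤ m) (hn : n ≠ 0)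
    (y : ℝ)
    (α lam : ℝ)
    (hα : α = 1 - (y - 2) * S (m - 1) y * (S (m - 1) y - S (m - 2) y))
    (hlam : lam = 2 + (y - 2) ^ 2 * (S (m - 1) y) ^ 2)
    (hφ : S (n - 1) lam * α - S (n - 2) lam = 0) :
    y > 2 := by
  by_contra hy'
  push_neg at hy'
  -- basic values
  have hSm1 : ∀ z : ℝ, S (-1) z = 0 := by
    intro z
    have h := hrec 0 z
    simp only [zero_add, zero_sub] at h
    rw [hS0, hS1] at h
    linarith [h]
  have hSm2 : ∀ z : ℝ, S (-2) z = -1 := by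
    intro z
    have h := hrec (-1) z
    rw [show (-1:ℤ) + 1 = 0 from by norm_num, show (-1:ℤ) - 1 = -2 from by norm_num] at h
    rw [hS0, hSm1] at h
    linarith [h]
  have hrec' : ∀ (i : ℤ) (z : ℝ), S i z = z * S (i - 1) z - S (i - 2) z := by
    intro i z
    have h := hrec (i - 1) z
    rw [show i - 1 + 1 = i from by ring, show i - 1 - 1 = i - 2 from by ring] at h
    exact h
  -- conserved quantity for S
  have norm : ∀ (i : ℤ) (z : ℝ),
      S i z ^ 2 + S (i - 1) z ^ 2 - z * S i z * S (i - 1) z = 1 := by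
    intro i z
    induction i using Int.induction_on with
    | zero => rw [hS0]; norm_num [hSm1 z]
    | succ k ih =>
      have h := hrec k z
      rw [show (k : ℤ) + 1 - 1 = k from by ring, h]
      ring_nf
      ring_nf at ih
      linarith [ih]
    | pred k ih =>
      have h2 : S (-(k:ℤ) - 2) z = z * S (-(k:ℤ) - 1) z - S (-(k:ℤ)) z := by
        have h := hrec' (-(k : ℤ)) z
        linarith [h]
      rw [show -(k : ℤ) - 1 - 1 = -k - 2 from by ring, h2]
      linear_combination ih
  -- key inequality
  have hC := norm (m - 1) y
  rw [show m - 1 - 1 = m - 2 from by ring] at hC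
  have hK : α ^ 2 + 1 - lam * α ≤ 0 := by
    have hid : lam * α - α ^ 2 - 1 = (2 - y) ^ 3 * (S (m - 1) y) ^ 4 := by
      rw [hα, hlam]
      linear_combination (-(2 - y) ^ 2 * (S (m - 1) y) ^ 2) * hC
    nlinarith [mul_nonneg (pow_nonneg (by linarith : (0:ℝ) ≤ 2 - y) 3)
      (pow_nonneg (sq_nonneg (S (m - 1) y)) 2), sq_nonneg (S (m - 1) y)]
  have hlam2 : (2 : ℝ) ≤ lam := by
    rw [hlam]; nlinarith [sq_nonneg ((y - 2) * S (m - 1) y)]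
  -- the sequence T
  set T : ℤ → ℝ := fun i => S (i - 1) lam * α - S (i - 2) lam with hT
  have hT0 : T 0 = 1 := by
    simp only [hT]
    norm_num [hSm1 lam, hSm2 lam]
  have hT1 : T 1 = α := by
    simp only [hT]
    norm_num [hS0, hSm1 lam]
  have hTrec : ∀ i : ℤ, T (i + 1) = lam * T i - T (i - 1) := by
    intro i
    simp only [hT]
    rw [show i + 1 - 1 = i from by ring, show i + 1 - 2 = i - 1 from by ring,
      show i - 1 - 1 = i - 2 from by ring, show i - 1 - 2 = i - 3 from by ring]
    have h1 := hrec' i lam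
    have h2 := hrec' (i - 1) lam
    rw [show i - 1 - 1 = i - 2 from by ring, show i - 1 - 2 = i - 3 from by ring] at h2
    rw [h1, h2]; ring
  -- conserved quantity for T
  have Q : ∀ i : ℤ, T (i + 1) ^ 2 + T i ^ 2 - lam * T (i + 1) * T i = α ^ 2 + 1 - lam * α := by
    intro i
    induction i using Int.induction_on with
    | zero => rw [hT0]; norm_num [hT1]
    | succ k ih =>
      have h := hTrec (k + 1)
      rw [show (k : ℤ) + 1 - 1 = k from by ring] at h
      rw [h]
      linear_combination ih
    | pred k ih =>
      have h' : T (-(k:ℤ) - 1) = lam * T (-(k:ℤ)) - T (-(k:ℤ) + 1) := by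
        have h := hTrec (-(k : ℤ))
        linarith [h]
      rw [show -(k : ℤ) - 1 + 1 = -k from by ring, h']
      linear_combination ih
  -- positivity
  have pos : ∀ i : ℤ, 0 < T i := by
    intro i
    induction i using Int.induction_on with
    | zero => rw [hT0]; norm_num
    | succ k ih =>
      have q := Q k
      by_contra hle
      push_neg at hle
      have h3 : lam * T (k + 1) * T k ≤ 0 := by
        have : lam * T (k + 1) ≤ 0 := mul_nonpos_of_nonneg_of_nonpos (by linarith) hle
        exact mul_nonpos_of_nonpos_of_nonneg this ih.le
      nlinarith [sq_nonneg (T (k + 1)), mul_pos ih ih]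
    | pred k ih =>
      have q := Q (-(k : ℤ) - 1)
      rw [show -(k : ℤ) - 1 + 1 = -k from by ring] at q
      by_contra hle
      push_neg at hle
      have h3 : lam * T (-(k:ℤ)) * T (-(k:ℤ) - 1) ≤ 0 := by
        have h4 : (0:ℝ) ≤ lam * T (-(k:ℤ)) := mul_nonneg (by linarith) ih.le
        exact mul_nonpos_of_nonneg_of_nonpos h4 hle
      nlinarith [sq_nonneg (T (-(k:ℤ))), mul_pos ih ih]
  have := pos n
  have hTn : T n = 0 := by simp only [hT]; exact hφ
  rw [hTn] at this
  exact lt_irrefl 0 this
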